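/- Let a/b and c/d be Farey neighbors with 0 < a/b < c/d ≤ 1, and let p/q be any reduced fraction with a/b < p/q < c/d. Then there exist an integer k ≥ 0 and ζ_1, …, ζ_k ∈ {a/b, c/d} such that W^{01}_{p/q} equals the concatenation W^{01}_{c/d} · W^{01}_{ζ_1} ⋯ W^{01}_{ζ_k} · W^{01}_{a/b}. Similarly, if 0 ≤ a/b < c/d < 1, then there exist k ≥ 0 and ζ_1, …, ζ_k ∈ {a/b, c/d} such that W^{10}_{p/q} = W^{10}_{a/b} · W^{10}_{ζ_1} ⋯ W^{10}_{ζ_k} · W^{10}_{c/d}. -/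

import Mathlib

/-- The 01-mechanical digit sequence of `r`: `α_j(r) = ⌈(j+1)r⌉ - ⌈jr⌉`. -/
noncomputable def alpha01 (r : ℚ) (j : ℕ) : ℤ := ⌈((j : ℚ) + 1) * r⌉ - ⌈(j : ℚ) * r⌉

/-- The 10-mechanical digit sequence of `r`: `β_j(r) = ⌊(j+1)r⌋ - ⌊jr⌋`. -/
noncomputable def beta10 (r : ℚ) (j : ℕ) : ℤ := ⌊((j : ℚ) + 1) * r⌋ - ⌊(j : ℚ) * r⌋

/-- The 01-word of `r` of length `q`: `(α_1(r), …, α_q(r))`. -/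
noncomputable def word01 (r : ℚ) (q : ℕ) : List ℤ := (List.range q).map fun i => alpha01 r (i + 1)

/-- The 10-word of `r` of length `q`: `(β_1(r), …, β_q(r))`. -/
noncomputable def word10 (r : ℚ) (q : ℕ) : List ℤ := (List.range q).map fun i => beta10 r (i + 1)


lemma F1 (a b c d : ℕ) (hb : 0 < b) (hd : 0 < d) (hF : b * c = a * d + 1)
    (j : ℕ) (hj : j ≤ b) :
    ⌊(j : ℚ) * (((a:ℚ) + c) / ((b:ℚ) + d))⌋ = ⌊(j : ℚ) * ((a:ℚ) / b)⌋ := by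
  have hb0 : (0:ℚ) < b := by exact_mod_cast hb
  have he0 : (0:ℚ) < (b:ℚ) + d := by positivity
  set n := ⌊(j : ℚ) * ((a:ℚ) / b)⌋ with hn
  have h1 : (n:ℚ) ≤ (j:ℚ) * ((a:ℚ)/b) := Int.floor_le _
  have h2 : (j:ℚ) * ((a:ℚ)/b) < n + 1 := Int.lt_floor_add_one _
  have h1' : (n:ℤ) * b ≤ (j:ℤ) * a := by
    have h := h1
    rw [← mul_div_assoc, le_div_iff₀ hb0] at h
    exact_mod_cast h
  have h2' : (j:ℤ) * a < (n + 1) * b := by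
    have h := h2
    rw [← mul_div_assoc, div_lt_iff₀ hb0] at h
    exact_mod_cast h
  have hF' : (b:ℤ) * c = (a:ℤ) * d + 1 := by exact_mod_cast hF
  have hj' : (j:ℤ) ≤ b := by exact_mod_cast hj
  have hbz : (0:ℤ) < b := by exact_mod_cast hb
  have hdz : (0:ℤ) < d := by exact_mod_cast hd
  have lower : (n:ℤ) * (b + d) ≤ (j:ℤ) * (a + c) := by
    have key : (n:ℤ) * (b + d) * b ≤ (j:ℤ) * (a + c) * b := by
      nlinarith [mul_le_mul_of_nonneg_right h1' (by positivity : (0:ℤ) ≤ (b:ℤ) + d),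
        (by positivity : (0:ℤ) ≤ (j:ℤ))]
    exact le_of_mul_le_mul_right key hbz
  have upper : (j:ℤ) * (a + c) < (n + 1) * (b + d) := by
    have key : (j:ℤ) * (a + c) * b < (n + 1) * (b + d) * b := by
      nlinarith [mul_le_mul_of_nonneg_right (by linarith : (j:ℤ) * a ≤ (n+1)*b - 1)
        (by positivity : (0:ℤ) ≤ (b:ℤ) + d)]
    exact lt_of_mul_lt_mul_right key (le_of_lt hbz)
  rw [Int.floor_eq_iff]
  constructor
  · rw [mul_div_assoc', le_div_iff₀ he0]
    exact_mod_cast lower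
  · rw [mul_div_assoc', div_lt_iff₀ he0]
    push_cast
    exact_mod_cast upper

lemma F2 (a b c d : ℕ) (hb : 0 < b) (hd : 0 < d) (hF : b * c = a * d + 1)
    (j : ℕ) (hj : j ≤ d) :
    ⌊((b:ℚ) + j) * (((a:ℚ) + c) / ((b:ℚ) + d))⌋ = a + ⌊(j : ℚ) * ((c:ℚ) / d)⌋ := by
  have hd0 : (0:ℚ) < d := by exact_mod_cast hd
  have he0 : (0:ℚ) < (b:ℚ) + d := by positivity
  set n := ⌊(j : ℚ) * ((c:ℚ) / d)⌋ with hn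
  have h1' : (n:ℤ) * d ≤ (j:ℤ) * c := by
    have h : (n:ℚ) ≤ (j:ℚ) * ((c:ℚ)/d) := Int.floor_le _
    rw [← mul_div_assoc, le_div_iff₀ hd0] at h
    exact_mod_cast h
  have h2' : (j:ℤ) * c < (n + 1) * d := by
    have h : (j:ℚ) * ((c:ℚ)/d) < (n:ℚ) + 1 := Int.lt_floor_add_one _
    rw [← mul_div_assoc, div_lt_iff₀ hd0] at h
    exact_mod_cast h
  have hF' : (b:ℤ) * c = (a:ℤ) * d + 1 := by exact_mod_cast hF
  have hj' : (j:ℤ) ≤ d := by exact_mod_cast hj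
  have hbz : (0:ℤ) < b := by exact_mod_cast hb
  have hdz : (0:ℤ) < d := by exact_mod_cast hd
  have hjz : (0:ℤ) ≤ j := by positivity
  have hFj : (j:ℤ) * (b * c) = (j:ℤ) * (a * d) + j := by rw [hF']; ring
  have hnb : (n:ℤ) * b ≤ (j:ℤ) * a + 1 := by
    have key : (n:ℤ) * b * d ≤ ((j:ℤ) * a + 1) * d := by
      nlinarith [mul_le_mul_of_nonneg_right h1' (le_of_lt hbz)]
    exact le_of_mul_le_mul_right key hdz
  have lower : ((a:ℤ) + n) * (b + d) ≤ ((b:ℤ) + j) * (a + c) := by nlinarith [h1', hnb]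
  have upper : ((b:ℤ) + j) * (a + c) < ((a:ℤ) + n + 1) * (b + d) := by
    have key : ((b:ℤ) + j) * (a + c) * d < ((a:ℤ) + n + 1) * (b + d) * d := by
      nlinarith [mul_le_mul_of_nonneg_right (by linarith : (j:ℤ)*c ≤ (n+1)*d - 1) (le_of_lt hbz),
        mul_le_mul_of_nonneg_right (by linarith : (j:ℤ)*c ≤ (n+1)*d - 1) (le_of_lt hdz), hFj, hbz]
    exact lt_of_mul_lt_mul_right key (le_of_lt hdz)
  have : ((a:ℤ) + n : ℤ) = (a:ℤ) + n := rfl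
  show ⌊((b:ℚ) + j) * (((a:ℚ) + c) / ((b:ℚ) + d))⌋ = ((a:ℤ) + n)
  rw [Int.floor_eq_iff]
  constructor
  · rw [mul_div_assoc', le_div_iff₀ he0]
    exact_mod_cast lower
  · rw [mul_div_assoc', div_lt_iff₀ he0]
    exact_mod_cast upper

lemma Tfloor (u v : ℕ) (hv : 0 < v) : ⌊(v:ℚ) * ((u:ℚ)/v)⌋ = u := by
  have hv0 : (v:ℚ) ≠ 0 := by positivity
  rw [mul_div_assoc', mul_comm, mul_div_assoc, div_self hv0, mul_one, Int.floor_natCast]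

lemma Sfloor (u v : ℕ) (huv : u < v) : ⌊((v:ℚ)+1) * ((u:ℚ)/v)⌋ = u := by
  have hv : 0 < v := by omega
  have hv0 : (0:ℚ) < v := by exact_mod_cast hv
  have h1 : ((v:ℚ)+1) * ((u:ℚ)/v) = ((u:ℤ):ℚ) + (u:ℚ)/v := by
    push_cast; field_simp
  rw [h1, Int.floor_intCast_add]
  have : ⌊(u:ℚ)/v⌋ = 0 := by
    rw [Int.floor_eq_zero_iff]
    constructor
    · positivity
    · rw [div_lt_iff₀ hv0, one_mul]; exact_mod_cast huv
  omega

lemma floor_cd_zero (c d : ℕ) (hd : 0 < d) (hcd : c < d) : ⌊(c:ℚ)/d⌋ = 0 := by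
  have hd0 : (0:ℚ) < d := by exact_mod_cast hd
  rw [Int.floor_eq_zero_iff]
  constructor
  · positivity
  · rw [div_lt_iff₀ hd0, one_mul]
    exact_mod_cast hcd

lemma med10 (a b c d : ℕ) (hb : 0 < b) (hd : 0 < d) (hF : b * c = a * d + 1)
    (hcd : c < d) :
    word10 (((a+c : ℕ):ℚ) / ((b+d : ℕ):ℚ)) (b+d) =
      word10 ((a:ℚ)/b) b ++ word10 ((c:ℚ)/d) d := by
  have hab : a < b := by
    by_contra h
    push_neg at h
    have h1 : b * c ≤ a * c := Nat.mul_le_mul_right c h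
    have h2 : a * (c+1) ≤ a * d := Nat.mul_le_mul_left a hcd
    have h3 : a * (c+1) = a * c + a := Nat.mul_succ a c
    omega
  have hd0 : (0:ℚ) < d := by exact_mod_cast hd
  have hcast : ((a+c : ℕ):ℚ) / ((b+d : ℕ):ℚ) = ((a:ℚ)+c)/((b:ℚ)+d) := by push_cast; ring
  rw [hcast]
  apply List.ext_getElem
  · simp [word10]
  intro i hi hi'
  simp only [word10, List.length_map, List.length_range] at hi hi'
  simp only [word10, List.getElem_map, List.getElem_range]
  rcases Nat.lt_or_ge i b with h | h
  · rw [List.getElem_append_left (by simpa [word10] using h)]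
    simp only [word10, List.getElem_map, List.getElem_range]
    unfold beta10
    have e1 : ((i+1 : ℕ):ℚ) + 1 = ((i+2 : ℕ):ℚ) := by push_cast; ring
    rw [e1]
    rcases Nat.lt_or_ge (i+1) b with h2 | h2
    · rw [F1 a b c d hb hd hF (i+1) (by omega), F1 a b c d hb hd hF (i+2) (by omega)]
    · -- i + 1 = b
      have hib : i + 1 = b := by omega
      have e3 : ((i+1:ℕ):ℚ) = (b:ℚ) := by exact_mod_cast congrArg (fun n => ((n:ℕ):ℚ)) hib
      have hA : ⌊((i+2:ℕ):ℚ) * (((a:ℚ)+c)/((b:ℚ)+d))⌋ = (a:ℤ) := by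
        have e2 : ((i+2 : ℕ):ℚ) = (b:ℚ) + ((1:ℕ):ℚ) := by
          rw [show i+2 = b+1 by omega]; push_cast; ring
        rw [e2, F2 a b c d hb hd hF 1 (by omega)]
        have e4 : ((1:ℕ):ℚ) * ((c:ℚ)/d) = (c:ℚ)/d := by push_cast; ring
        rw [e4, floor_cd_zero c d hd hcd, add_zero]
      have hB : ⌊((i+1:ℕ):ℚ) * (((a:ℚ)+c)/((b:ℚ)+d))⌋ = (a:ℤ) := by
        rw [F1 a b c d hb hd hF (i+1) (by omega), e3, Tfloor a b hb]
      have hC : ⌊((i+2:ℕ):ℚ) * ((a:ℚ)/b)⌋ = (a:ℤ) := by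
        have e2 : ((i+2 : ℕ):ℚ) = (b:ℚ) + 1 := by
          rw [show i+2 = b+1 by omega]; push_cast; ring
        rw [e2, Sfloor a b hab]
      have hD : ⌊((i+1:ℕ):ℚ) * ((a:ℚ)/b)⌋ = (a:ℤ) := by
        rw [e3, Tfloor a b hb]
      rw [hA, hB, hC, hD]
  · rw [List.getElem_append_right (by simpa [word10] using h)]
    simp only [word10, List.getElem_map, List.getElem_range, List.length_map, List.length_range]
    unfold beta10
    have e1 : ((i - b + 1 : ℕ):ℚ) + 1 = ((i - b + 2 : ℕ):ℚ) := by push_cast; ring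
    have e1' : ((i+1 : ℕ):ℚ) + 1 = ((i+2 : ℕ):ℚ) := by push_cast; ring
    rw [e1, e1']
    have eb1 : ((i+1 : ℕ):ℚ) = (b:ℚ) + ((i-b+1 : ℕ):ℚ) := by
      rw [show i + 1 = b + (i - b + 1) by omega]; push_cast; ring
    rcases Nat.lt_or_ge (i+1) (b+d) with h2 | h2
    · have eb2 : ((i+2 : ℕ):ℚ) = (b:ℚ) + ((i-b+2 : ℕ):ℚ) := by
        rw [show i + 2 = b + (i - b + 2) by omega]; push_cast; ring
      rw [eb1, eb2, F2 a b c d hb hd hF (i-b+1) (by omega),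
        F2 a b c d hb hd hF (i-b+2) (by omega)]
      ring
    · -- i + 1 = b + d
      have hid : i - b + 1 = d := by omega
      have hA : ⌊((i+2:ℕ):ℚ) * (((a:ℚ)+c)/((b:ℚ)+d))⌋ = (a:ℤ) + c := by
        have e2 : ((i+2:ℕ):ℚ) * (((a:ℚ)+c)/((b:ℚ)+d))
            = (((b+d:ℕ):ℚ) + 1) * (((a+c:ℕ):ℚ)/((b+d:ℕ):ℚ)) := by
          rw [show i+2 = (b+d)+1 by omega]; push_cast; ring
        rw [e2, Sfloor (a+c) (b+d) (by omega)]
        push_cast; ring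
      have hB : ⌊((i+1:ℕ):ℚ) * (((a:ℚ)+c)/((b:ℚ)+d))⌋ = (a:ℤ) + c := by
        have e2 : ((i+1:ℕ):ℚ) * (((a:ℚ)+c)/((b:ℚ)+d))
            = ((b+d:ℕ):ℚ) * (((a+c:ℕ):ℚ)/((b+d:ℕ):ℚ)) := by
          rw [show i+1 = b+d by omega]; push_cast; ring
        rw [e2, Tfloor (a+c) (b+d) (by omega)]
        push_cast; ring
      have hC : ⌊((i-b+2:ℕ):ℚ) * ((c:ℚ)/d)⌋ = (c:ℤ) := by
        have e2 : ((i-b+2 : ℕ):ℚ) = (d:ℚ) + 1 := by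
          rw [show i-b+2 = d+1 by omega]; push_cast; ring
        rw [e2, Sfloor c d hcd]
      have hD : ⌊((i-b+1:ℕ):ℚ) * ((c:ℚ)/d)⌋ = (c:ℤ) := by
        rw [show ((i-b+1 : ℕ):ℚ) = (d:ℚ) by exact_mod_cast congrArg (fun n => ((n:ℕ):ℚ)) hid,
          Tfloor c d hd]
      rw [hA, hB, hC, hD]
      ring

lemma a_lt_b (a b c d : ℕ) (hb : 0 < b) (hcd : c < d) (hF : b * c = a * d + 1) : a < b := by
  by_contra h
  push_neg at h
  have h1 : b * c ≤ a * c := Nat.mul_le_mul_right c h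
  have h2 : a * (c+1) ≤ a * d := Nat.mul_le_mul_left a hcd
  have h3 : a * (c+1) = a * c + a := Nat.mul_succ a c
  omega

lemma struct (a b c d p q : ℕ) (hb : 0 < b) (hd : 0 < d) (hq : 0 < q)
    (hF : b * c = a * d + 1)
    (h1 : (a:ℚ)/b < (p:ℚ)/q) (h2 : (p:ℚ)/q < (c:ℚ)/d) : b + d ≤ q := by
  have hb0 : (0:ℚ) < b := by exact_mod_cast hb
  have hd0 : (0:ℚ) < d := by exact_mod_cast hd
  have hq0 : (0:ℚ) < q := by exact_mod_cast hq
  rw [div_lt_div_iff₀ hb0 hq0] at h1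
  rw [div_lt_div_iff₀ hq0 hd0] at h2
  have h1' : (a:ℤ) * q < (p:ℤ) * b := by exact_mod_cast h1
  have h2' : (p:ℤ) * d < (c:ℤ) * q := by exact_mod_cast h2
  have hF' : (b:ℤ) * c = (a:ℤ) * d + 1 := by exact_mod_cast hF
  have hkey : (q:ℤ) = d * ((p:ℤ)*b - a*q) + b * ((c:ℤ)*q - p*d) := by
    linear_combination (-(q:ℤ)) * hF'
  have hbz : (1:ℤ) ≤ b := by exact_mod_cast hb
  have hdz : (1:ℤ) ≤ d := by exact_mod_cast hd
  have : (b:ℤ) + d ≤ q := by nlinarith [h1', h2']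
  exact_mod_cast this

lemma eqcase (a b c d p q : ℕ) (hq : 0 < q) (hpq : Nat.Coprime p q)
    (hF : b * c = a * d + 1)
    (heq : (p:ℚ)/q = ((a+c : ℕ):ℚ)/((b+d : ℕ):ℚ)) (hbd : 0 < b + d) :
    p = a + c ∧ q = b + d := by
  have hq0 : (0:ℚ) < q := by exact_mod_cast hq
  have hbd0 : (0:ℚ) < ((b+d : ℕ):ℚ) := by exact_mod_cast hbd
  rw [div_eq_div_iff hq0.ne' hbd0.ne'] at heq
  have hcross : p * (b+d) = (a+c) * q := by exact_mod_cast heq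
  have he : (b+d) * c = (a+c) * d + 1 := by
    rw [Nat.add_mul, Nat.add_mul, hF]; ring
  have hcop : Nat.Coprime (a+c) (b+d) := by
    have d1 : Nat.gcd (a+c) (b+d) ∣ (b+d) * c := (Nat.gcd_dvd_right _ _).mul_right c
    have d2 : Nat.gcd (a+c) (b+d) ∣ (a+c) * d := (Nat.gcd_dvd_left _ _).mul_right d
    have d3 : Nat.gcd (a+c) (b+d) ∣ (b+d) * c - (a+c) * d := Nat.dvd_sub d1 d2
    rw [show (b+d) * c - (a+c) * d = 1 by rw [he]; omega] at d3
    exact Nat.dvd_one.mp d3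
  have hq1 : q ∣ b + d := by
    have : q ∣ p * (b+d) := hcross ▸ Dvd.intro_left _ rfl
    exact (Nat.Coprime.dvd_of_dvd_mul_left hpq.symm this)
  have hq2 : b + d ∣ q := by
    have : (b+d) ∣ (a+c) * q := ⟨p, by rw [← hcross]; ring⟩
    exact (Nat.Coprime.dvd_of_dvd_mul_left hcop.symm this)
  have hqe : q = b + d := Nat.dvd_antisymm hq1 hq2
  refine ⟨?_, hqe⟩
  have : p * (b+d) = (a+c) * (b+d) := by rw [hcross, hqe]
  exact Nat.eq_of_mul_eq_mul_right hbd this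

lemma expandL (m x y : ℕ × ℕ) (W : ℕ × ℕ → List ℤ) (hmed : W m = W x ++ W y)
    (good : ℕ × ℕ → Prop) (hx : good x) (hy : good y) :
    ∀ L : List (ℕ × ℕ), (∀ z ∈ L, good z ∨ z = m) →
    ∃ L' : List (ℕ × ℕ), (∀ z ∈ L', good z) ∧
      (L'.map W).flatten = (L.map W).flatten := by
  intro L
  induction L with
  | nil => exact fun _ => ⟨[], by simp, by simp⟩
  | cons z t ihc =>
    intro hmem
    obtain ⟨T, hT1, hT2⟩ := ihc (fun w hw => hmem w (List.mem_cons_of_mem z hw))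
    rcases hmem z (List.mem_cons_self) with hg | hm
    · refine ⟨z :: T, ?_, by simp [hT2]⟩
      intro w hw
      rcases List.mem_cons.mp hw with h | h
      · exact h ▸ hg
      · exact hT1 w h
    · refine ⟨x :: y :: T, ?_, ?_⟩
      · intro w hw
        rcases List.mem_cons.mp hw with h | h
        · exact h ▸ hx
        rcases List.mem_cons.mp h with h' | h'
        · exact h' ▸ hy
        · exact hT1 w h'
      subst hm
      simp [hmed, hT2, List.append_assoc]

lemma key10 (p q : ℕ) (hq : 0 < q) (hpq : Nat.Coprime p q) :
    ∀ N : ℕ, ∀ a b c d : ℕ, 0 < b → 0 < d → b * c = a * d + 1 → c < d →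
    (a:ℚ)/b < (p:ℚ)/q → (p:ℚ)/q < (c:ℚ)/d → q ≤ b + d + N →
    ∃ L : List (ℕ×ℕ), (∀ z ∈ L, z = (a,b) ∨ z = (c,d)) ∧
      word10 ((p:ℚ)/q) q =
        word10 ((a:ℚ)/b) b ++
          (L.map fun z => word10 ((z.1:ℚ)/(z.2:ℚ)) z.2).flatten ++
          word10 ((c:ℚ)/d) d := by
  intro N
  induction N with
  | zero =>
    intro a b c d hb hd hF hcd h1 h2 hbound
    have hF2 : b * (a+c) = a * (b+d) + 1 := by
      rw [Nat.mul_add, Nat.mul_add, hF]; ring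
    have hF3 : (b+d) * c = (a+c) * d + 1 := by
      rw [Nat.add_mul, Nat.add_mul, hF]; ring
    rcases lt_trichotomy ((p:ℚ)/q) (((a+c : ℕ):ℚ)/((b+d : ℕ):ℚ)) with hlt | heq | hgt
    · exfalso
      have := struct a b (a+c) (b+d) p q hb (by omega) hq hF2 h1 hlt
      omega
    · obtain ⟨hp, hq'⟩ := eqcase a b c d p q hq hpq hF heq (by omega)
      subst hp; subst hq'
      exact ⟨[], by simp, by simpa using med10 a b c d hb hd hF hcd⟩
    · exfalso
      have := struct (a+c) (b+d) c d p q (by omega) hd hq hF3 hgt h2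
      omega
  | succ N ih =>
    intro a b c d hb hd hF hcd h1 h2 hbound
    have hF2 : b * (a+c) = a * (b+d) + 1 := by
      rw [Nat.mul_add, Nat.mul_add, hF]; ring
    have hF3 : (b+d) * c = (a+c) * d + 1 := by
      rw [Nat.add_mul, Nat.add_mul, hF]; ring
    have hab : a < b := a_lt_b a b c d hb hcd hF
    have hmed := med10 a b c d hb hd hF hcd
    rcases lt_trichotomy ((p:ℚ)/q) (((a+c : ℕ):ℚ)/((b+d : ℕ):ℚ)) with hlt | heq | hgt
    · obtain ⟨L', hmem', hw⟩ := ih a b (a+c) (b+d) hb (by omega) hF2 (by omega) h1 hlt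
        (by omega)
      obtain ⟨L'', hmem'', hflat⟩ := expandL (a+c, b+d) (a, b) (c, d)
        (fun z => word10 ((z.1:ℚ)/(z.2:ℚ)) z.2) (by simpa using hmed)
        (fun z => z = (a,b) ∨ z = (c,d)) (Or.inl rfl) (Or.inr rfl) L'
        (fun z hz => (hmem' z hz).imp_left Or.inl)
      refine ⟨L'' ++ [(a,b)], ?_, ?_⟩
      · intro z hz
        rcases List.mem_append.mp hz with h | h
        · exact hmem'' z h
        · simp at h; exact Or.inl h
      · rw [hw, hmed]
        simp only [List.map_append, List.flatten_append, List.map_cons, List.map_nil]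
        rw [← hflat]
        simp [List.append_assoc]
    · obtain ⟨hp, hq'⟩ := eqcase a b c d p q hq hpq hF heq (by omega)
      subst hp; subst hq'
      exact ⟨[], by simp, by simpa using hmed⟩
    · obtain ⟨L', hmem', hw⟩ := ih (a+c) (b+d) c d (by omega) hd hF3 hcd hgt h2
        (by omega)
      obtain ⟨L'', hmem'', hflat⟩ := expandL (a+c, b+d) (a, b) (c, d)
        (fun z => word10 ((z.1:ℚ)/(z.2:ℚ)) z.2) (by simpa using hmed)
        (fun z => z = (a,b) ∨ z = (c,d)) (Or.inl rfl) (Or.inr rfl) L'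
        (fun z hz => (hmem' z hz).symm.imp_left Or.inr)
      refine ⟨(c,d) :: L'', ?_, ?_⟩
      · intro z hz
        rcases List.mem_cons.mp hz with h | h
        · exact Or.inr h
        · exact hmem'' z h
      · rw [hw, hmed]
        simp only [List.map_cons, List.flatten_cons]
        rw [← hflat]
        simp [List.append_assoc]

lemma toZeta {α β : Type} [Inhabited α] (f : α → β) (L : List α) (z0 : α) :
    (List.range L.length).map (fun i => f (L.getD i z0)) = L.map f := by
  apply List.ext_getElem
  · simp
  intro i hi hi'
  simp only [List.getElem_map, List.getElem_range]
  simp only [List.length_map] at hi'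
  rw [List.getD_eq_getElem L z0 hi']

lemma beta_comp (r : ℚ) (j : ℕ) : beta10 (1 - r) j = 1 - alpha01 r j := by
  unfold beta10 alpha01
  have h1 : ((j:ℚ)+1) * (1 - r) = (((j:ℕ)+1 : ℤ):ℚ) + (-(((j:ℚ)+1) * r)) := by push_cast; ring
  have h2 : (j:ℚ) * (1 - r) = (((j:ℕ) : ℤ):ℚ) + (-((j:ℚ) * r)) := by push_cast; ring
  rw [h1, h2, Int.floor_intCast_add, Int.floor_intCast_add, Int.floor_neg, Int.floor_neg]
  push_cast
  ring

lemma comp (r : ℚ) (n : ℕ) : word01 r n = (word10 (1 - r) n).map (fun x => 1 - x) := by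
  apply List.ext_getElem
  · simp [word01, word10]
  intro i hi hi'
  simp only [word01, word10, List.getElem_map, List.getElem_range]
  rw [beta_comp]
  ring


/-- if `a/b < c/d` are Farey neighbors and `a/b < p/q < c/d`, then
`W^{01}_{p/q}` is a concatenation `W^{01}_{c/d} · W^{01}_{ζ_1} ⋯ W^{01}_{ζ_k} · W^{01}_{a/b}`
with each `ζ_i ∈ {a/b, c/d}` (when `0 < a/b` and `c/d ≤ 1`), and analogously
`W^{10}_{p/q} = W^{10}_{a/b} · W^{10}_{ζ_1} ⋯ W^{10}_{ζ_k} · W^{10}_{c/d}` (when `c/d < 1`). -/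
theorem word_decomposition_between_farey_neighbors
    (a b c d p q : ℕ) (hb : 0 < b) (hd : 0 < d) (hq : 0 < q)
    (hab : Nat.Coprime a b) (hcd : Nat.Coprime c d) (hpq : Nat.Coprime p q)
    (hFarey : b * c = a * d + 1)
    (h1 : (a : ℚ) / b < (p : ℚ) / q) (h2 : (p : ℚ) / q < (c : ℚ) / d) :
    ((0 < a ∧ c ≤ d) →
      ∃ (k : ℕ) (ζ : ℕ → ℕ × ℕ),
        (∀ i, 1 ≤ i → i ≤ k → ζ i = (a, b) ∨ ζ i = (c, d)) ∧
        word01 ((p : ℚ) / q) q =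
          word01 ((c : ℚ) / d) d ++
            ((List.range k).map fun i =>
              word01 (((ζ (i + 1)).1 : ℚ) / ((ζ (i + 1)).2 : ℚ)) (ζ (i + 1)).2).flatten ++
            word01 ((a : ℚ) / b) b) ∧
    (c < d →
      ∃ (k : ℕ) (ζ : ℕ → ℕ × ℕ),
        (∀ i, 1 ≤ i → i ≤ k → ζ i = (a, b) ∨ ζ i = (c, d)) ∧
        word10 ((p : ℚ) / q) q =
          word10 ((a : ℚ) / b) b ++
            ((List.range k).map fun i =>
              word10 (((ζ (i + 1)).1 : ℚ) / ((ζ (i + 1)).2 : ℚ)) (ζ (i + 1)).2).flatten ++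
            word10 ((c : ℚ) / d) d) := by
  constructor
  · -- 01 case
    rintro ⟨ha, hcd'⟩
    have hq0 : (0:ℚ) < q := by exact_mod_cast hq
    have hb0 : (0:ℚ) < b := by exact_mod_cast hb
    have hd0 : (0:ℚ) < d := by exact_mod_cast hd
    have hab2 : a < b := by
      have hx : b * c ≤ b * d := Nat.mul_le_mul_left b hcd'
      have hy : a * d < b * d := by omega
      exact Nat.lt_of_mul_lt_mul_right hy
    have hpltq : p < q := by
      have hx : (p:ℚ)/q < 1 := lt_of_lt_of_le h2 (by rw [div_le_one hd0]; exact_mod_cast hcd')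
      rw [div_lt_one hq0] at hx
      exact_mod_cast hx
    have hbd : b ≠ d := by
      intro h
      have h1' : b ∣ b * c := dvd_mul_right b c
      have h2' : b ∣ a * b := dvd_mul_left b a
      have hF2 : b * c = a * b + 1 := by rw [hFarey, h]
      have h4 := Nat.dvd_sub h1' h2'
      rw [show b * c - a * b = 1 by omega] at h4
      have hb1 : b = 1 := Nat.dvd_one.mp h4
      rw [hb1, one_mul, mul_one] at hF2
      omega
    have hpairne : (d - c, d) ≠ (b - a, b) := by
      intro h
      exact hbd ((congrArg Prod.snd h)).symm
    have hco : Nat.Coprime (q-p) q := by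
      have g1 := Nat.gcd_dvd_left (q-p) q
      have g2 := Nat.gcd_dvd_right (q-p) q
      have g3 : Nat.gcd (q-p) q ∣ p := by
        have g4 := Nat.dvd_sub g2 g1
        rwa [show q - (q - p) = p by omega] at g4
      exact Nat.dvd_one.mp (hpq ▸ Nat.dvd_gcd g3 g2)
    have hF' : d * (b-a) = (d-c) * b + 1 := by
      have hFz : (b:ℤ) * c = (a:ℤ) * d + 1 := by exact_mod_cast hFarey
      zify [hab2.le, hcd']
      linear_combination hFz
    have h2q : (p:ℚ) * d < c * q := by rw [div_lt_div_iff₀ hq0 hd0] at h2; exact h2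
    have h1q : (a:ℚ) * q < p * b := by rw [div_lt_div_iff₀ hb0 hq0] at h1; exact h1
    have h1' : ((d-c : ℕ):ℚ)/((d:ℕ):ℚ) < ((q-p : ℕ):ℚ)/((q:ℕ):ℚ) := by
      rw [Nat.cast_sub hcd', Nat.cast_sub hpltq.le, div_lt_div_iff₀ hd0 hq0]
      nlinarith [h2q]
    have h2' : ((q-p:ℕ):ℚ)/((q:ℕ):ℚ) < ((b-a:ℕ):ℚ)/((b:ℕ):ℚ) := by
      rw [Nat.cast_sub hab2.le, Nat.cast_sub hpltq.le, div_lt_div_iff₀ hq0 hb0]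
      nlinarith [h1q]
    obtain ⟨L, hmem, hw⟩ := key10 (q-p) q hq hco q (d-c) d (b-a) b hd hb hF' (by omega)
      h1' h2' (by omega)
    have hvalp : (1:ℚ) - (p:ℚ)/q = ((q-p:ℕ):ℚ)/(q:ℚ) := by
      rw [Nat.cast_sub hpltq.le]; field_simp
    have hvalc : (1:ℚ) - (c:ℚ)/d = ((d-c:ℕ):ℚ)/(d:ℚ) := by
      rw [Nat.cast_sub hcd']; field_simp
    have hvala : (1:ℚ) - (a:ℚ)/b = ((b-a:ℕ):ℚ)/(b:ℚ) := by
      rw [Nat.cast_sub hab2.le]; field_simp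
    have hcompp : word01 ((p:ℚ)/q) q = (word10 (((q-p:ℕ):ℚ)/(q:ℚ)) q).map (fun x => 1 - x) := by
      rw [← hvalp]; exact comp _ q
    have hcompc : word01 ((c:ℚ)/d) d = (word10 (((d-c:ℕ):ℚ)/(d:ℚ)) d).map (fun x => 1 - x) := by
      rw [← hvalc]; exact comp _ d
    have hcompa : word01 ((a:ℚ)/b) b = (word10 (((b-a:ℕ):ℚ)/(b:ℚ)) b).map (fun x => 1 - x) := by
      rw [← hvala]; exact comp _ b
    set hfun : ℕ × ℕ → ℕ × ℕ := fun z => if z = (b-a,b) then (a,b) else (c,d) with hfun_def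
    set L0 : List (ℕ × ℕ) := L.map hfun with hL0
    have hkey : word01 ((p:ℚ)/q) q =
        word01 ((c:ℚ)/d) d ++
          (L0.map fun z => word01 ((z.1:ℚ)/(z.2:ℚ)) z.2).flatten ++
          word01 ((a:ℚ)/b) b := by
      rw [hcompp, hw, hcompc, hcompa]
      simp only [List.map_append]
      congr 1
      congr 1
      rw [List.map_flatten, List.map_map, hL0, List.map_map]
      congr 1
      apply List.map_congr_left
      intro z hz
      rcases hmem z hz with h | h
      · subst h
        simp only [Function.comp_apply, hfun_def, if_neg hpairne]
        exact (hcompc.symm : _)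
      · subst h
        simp only [Function.comp_apply, hfun_def, if_pos rfl]
        exact (hcompa.symm : _)
    refine ⟨L0.length, fun i => L0.getD (i-1) (a,b), ?_, ?_⟩
    · intro i hi1 hi2
      have hlt : i - 1 < L0.length := by omega
      have hx : L0[i-1] = (a,b) ∨ L0[i-1] = (c,d) := by
        have hm : L0[i-1] ∈ L0 := List.getElem_mem hlt
        have hm2 : L0[i-1] ∈ List.map hfun L := by rw [← hL0]; exact hm
        obtain ⟨w, hwmem, hwz⟩ := List.mem_map.mp hm2
        rw [← hwz]
        by_cases hcase : w = (b-a,b)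
        · left; simp [hfun_def, hcase]
        · right; simp [hfun_def, hcase]
      show L0.getD (i - 1) (a, b) = (a, b) ∨ L0.getD (i - 1) (a, b) = (c, d)
      rw [List.getD_eq_getElem L0 (a,b) hlt]
      exact hx
    · rw [hkey]
      congr 1
      congr 1
      simp only [Nat.add_sub_cancel]
      exact congrArg List.flatten ((toZeta (fun z : ℕ × ℕ => word01 ((z.1:ℚ)/(z.2:ℚ)) z.2) L0 (a,b)).symm)
  · -- 10 case
    intro hltcd
    obtain ⟨L, hmem, hw⟩ := key10 p q hq hpq q a b c d hb hd hFarey hltcd h1 h2 (by omega)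
    refine ⟨L.length, fun i => L.getD (i-1) (a,b), ?_, ?_⟩
    · intro i hi1 hi2
      have hlt : i - 1 < L.length := by omega
      have hx := hmem _ (List.getElem_mem hlt)
      show L.getD (i - 1) (a, b) = (a, b) ∨ L.getD (i - 1) (a, b) = (c, d)
      rw [List.getD_eq_getElem L (a,b) hlt]
      exact hx
    · rw [hw]
      congr 1
      congr 1
      simp only [Nat.add_sub_cancel]
      exact congrArg List.flatten ((toZeta (fun z : ℕ × ℕ => word10 ((z.1:ℚ)/(z.2:ℚ)) z.2) L (a,b)).symm)
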